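/- Let G1, G2 be disjoint connected 3-leaf powers and H = (G1,S1) ⊗ (G2,S2) their join composition. If H is a 3-leaf power, then both S1 and S2 are cliques, or there is a vertex v in one of the graphs, say G1, with S1 = N(v) ∪ {v} and S2 = V(G2) a clique. -/

import Mathlib

open SimpleGraph

/-- The bull: a triangle `0,1,2` with pendant vertices `3` (on `1`) and `4` (on `2`). -/
def bull : SimpleGraph (Fin 5) :=
  SimpleGraph.fromRel (fun a b => (a, b) ∈ ([(0,1),(0,2),(1,2),(1,3),(2,4)] : List (Fin 5 × Fin 5)))

/-- The dart: a diamond `0,1,2,3` (missing edge `(0,1)`) plus a pendant vertex `4`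
adjacent to the degree-3 vertex `2`. -/
def dart : SimpleGraph (Fin 5) :=
  SimpleGraph.fromRel (fun a b => (a, b) ∈ ([(0,2),(0,3),(1,2),(1,3),(2,3),(2,4)] : List (Fin 5 × Fin 5)))

/-- The gem: a path `0-1-2-3` plus a dominating vertex `4`. -/
def gem : SimpleGraph (Fin 5) :=
  SimpleGraph.fromRel (fun a b => (a, b) ∈ ([(0,1),(1,2),(2,3),(0,4),(1,4),(2,4),(3,4)] : List (Fin 5 × Fin 5)))

/-- A graph is a 3-leaf power iff it is {bull, dart, gem, chordless `C≥4`}-free. -/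
def Is3LeafPower {V : Type*} (H : SimpleGraph V) : Prop :=
  IsEmpty (bull ↪g H) ∧ IsEmpty (dart ↪g H) ∧ IsEmpty (gem ↪g H) ∧
    ∀ n, 4 ≤ n → IsEmpty (SimpleGraph.cycleGraph n ↪g H)

/-- The join composition `(G1,S1) ⊗ (G2,S2)`: the disjoint union of `G1` and `G2`
together with all edges between `S1` and `S2`. -/
def joinComp {V1 V2 : Type*} (G1 : SimpleGraph V1) (G2 : SimpleGraph V2)
    (S1 : Set V1) (S2 : Set V2) : SimpleGraph (V1 ⊕ V2) :=
  SimpleGraph.fromRel (fun a b =>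
    (∃ x y, a = .inl x ∧ b = .inl y ∧ G1.Adj x y) ∨
    (∃ x y, a = .inr x ∧ b = .inr y ∧ G2.Adj x y) ∨
    (∃ x y, a = .inl x ∧ b = .inr y ∧ x ∈ S1 ∧ y ∈ S2))

section Helpers

variable {V1 V2 : Type*} {G1 : SimpleGraph V1} {G2 : SimpleGraph V2} {S1 : Set V1} {S2 : Set V2}

lemma jc_ll {x y : V1} : (joinComp G1 G2 S1 S2).Adj (.inl x) (.inl y) ↔ G1.Adj x y := by
  simp only [joinComp, fromRel_adj]
  constructor
  · rintro ⟨-, h | h⟩ <;> rcases h with (⟨_,_,h1,h2,h3⟩|⟨_,_,h1,h2,h3⟩|⟨_,_,h1,h2,h3⟩) <;>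
      simp_all <;> subst_vars <;> (try exact h3) <;> exact h3.symm
  · intro h; exact ⟨by simpa using h.ne, Or.inl (Or.inl ⟨x, y, rfl, rfl, h⟩)⟩

lemma jc_rr {x y : V2} : (joinComp G1 G2 S1 S2).Adj (.inr x) (.inr y) ↔ G2.Adj x y := by
  simp only [joinComp, fromRel_adj]
  constructor
  · rintro ⟨-, h | h⟩ <;> rcases h with (⟨_,_,h1,h2,h3⟩|⟨_,_,h1,h2,h3⟩|⟨_,_,h1,h2,h3⟩) <;>
      simp_all <;> subst_vars <;> (try exact h3) <;> exact h3.symm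
  · intro h; exact ⟨by simpa using h.ne, Or.inl (Or.inr (Or.inl ⟨x, y, rfl, rfl, h⟩))⟩

lemma jc_lr {x : V1} {y : V2} :
    (joinComp G1 G2 S1 S2).Adj (.inl x) (.inr y) ↔ x ∈ S1 ∧ y ∈ S2 := by
  simp only [joinComp, fromRel_adj]
  constructor
  · rintro ⟨-, h | h⟩ <;> rcases h with (⟨_,_,h1,h2,h3⟩|⟨_,_,h1,h2,h3⟩|⟨_,_,h1,h2,h3,h4⟩) <;>
      simp_all
  · rintro ⟨hx, hy⟩; exact ⟨by simp, Or.inl (Or.inr (Or.inr ⟨x, y, rfl, rfl, hx, hy⟩))⟩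

lemma jc_rl {x : V2} {y : V1} :
    (joinComp G1 G2 S1 S2).Adj (.inr x) (.inl y) ↔ y ∈ S1 ∧ x ∈ S2 := by
  rw [adj_comm, jc_lr]

end Helpers

def embed_of_iff {α V : Type*} {A : SimpleGraph α} {H : SimpleGraph V} (f : α → V)
    (hinj : Function.Injective f) (h : ∀ i j, H.Adj (f i) (f j) ↔ A.Adj i j) : A ↪g H :=
  ⟨⟨f, hinj⟩, h _ _⟩

lemma no_gem {V : Type*} {H : SimpleGraph V} (hH : IsEmpty (gem ↪g H)) {v0 v1 v2 v3 v4 : V}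
    (e01 : H.Adj v0 v1) (e12 : H.Adj v1 v2) (e23 : H.Adj v2 v3)
    (e04 : H.Adj v0 v4) (e14 : H.Adj v1 v4) (e24 : H.Adj v2 v4) (e34 : H.Adj v3 v4)
    (n02 : ¬H.Adj v0 v2) (n03 : ¬H.Adj v0 v3) (n13 : ¬H.Adj v1 v3)
    (d02 : v0 ≠ v2) (d03 : v0 ≠ v3) (d13 : v1 ≠ v3) : False := by
  have e10 := e01.symm; have e21 := e12.symm; have e32 := e23.symm
  have e40 := e04.symm; have e41 := e14.symm; have e42 := e24.symm; have e43 := e34.symm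
  have n20 : ¬H.Adj v2 v0 := fun h => n02 h.symm
  have n30 : ¬H.Adj v3 v0 := fun h => n03 h.symm
  have n31 : ¬H.Adj v3 v1 := fun h => n13 h.symm
  refine hH.false (embed_of_iff ![v0,v1,v2,v3,v4] ?_ ?_)
  · intro i j hij
    fin_cases i <;> fin_cases j <;> simp_all
  · intro i j
    fin_cases i <;> fin_cases j <;>
      simp only [Matrix.cons_val_zero, Matrix.cons_val_one, Matrix.head_cons, Matrix.cons_val_two,
        Matrix.tail_cons, Matrix.cons_val_three, Matrix.cons_val_four, Matrix.cons_val_fin_one] <;>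
      rw [gem, fromRel_adj] <;>
      first
      | exact iff_of_true (by assumption) (by decide)
      | exact iff_of_false (by assumption) (by decide)
      | exact iff_of_false (H.loopless.irrefl _) (by decide)

lemma no_dart {V : Type*} {H : SimpleGraph V} (hH : IsEmpty (dart ↪g H)) {v0 v1 v2 v3 v4 : V}
    (e02 : H.Adj v0 v2) (e03 : H.Adj v0 v3) (e12 : H.Adj v1 v2) (e13 : H.Adj v1 v3)
    (e23 : H.Adj v2 v3) (e24 : H.Adj v2 v4)
    (n01 : ¬H.Adj v0 v1) (n04 : ¬H.Adj v0 v4) (n14 : ¬H.Adj v1 v4) (n34 : ¬H.Adj v3 v4)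
    (d01 : v0 ≠ v1) (d04 : v0 ≠ v4) (d14 : v1 ≠ v4) (d34 : v3 ≠ v4) : False := by
  have e20 := e02.symm; have e30 := e03.symm; have e21 := e12.symm; have e31 := e13.symm
  have e32 := e23.symm; have e42 := e24.symm
  have n10 : ¬H.Adj v1 v0 := fun h => n01 h.symm
  have n40 : ¬H.Adj v4 v0 := fun h => n04 h.symm
  have n41 : ¬H.Adj v4 v1 := fun h => n14 h.symm
  have n43 : ¬H.Adj v4 v3 := fun h => n34 h.symm
  refine hH.false (embed_of_iff ![v0,v1,v2,v3,v4] ?_ ?_)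
  · intro i j hij
    fin_cases i <;> fin_cases j <;> simp_all
  · intro i j
    fin_cases i <;> fin_cases j <;>
      simp only [Matrix.cons_val_zero, Matrix.cons_val_one, Matrix.head_cons, Matrix.cons_val_two,
        Matrix.tail_cons, Matrix.cons_val_three, Matrix.cons_val_four, Matrix.cons_val_fin_one] <;>
      rw [dart, fromRel_adj] <;>
      first
      | exact iff_of_true (by assumption) (by decide)
      | exact iff_of_false (by assumption) (by decide)
      | exact iff_of_false (H.loopless.irrefl _) (by decide)

lemma no_C4 {V : Type*} {H : SimpleGraph V} (hH : IsEmpty (cycleGraph 4 ↪g H)) {v0 v1 v2 v3 : V}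
    (e01 : H.Adj v0 v1) (e12 : H.Adj v1 v2) (e23 : H.Adj v2 v3) (e03 : H.Adj v0 v3)
    (n02 : ¬H.Adj v0 v2) (n13 : ¬H.Adj v1 v3)
    (d02 : v0 ≠ v2) (d13 : v1 ≠ v3) : False := by
  have e10 := e01.symm; have e21 := e12.symm; have e32 := e23.symm; have e30 := e03.symm
  have n20 : ¬H.Adj v2 v0 := fun h => n02 h.symm
  have n31 : ¬H.Adj v3 v1 := fun h => n13 h.symm
  refine hH.false (embed_of_iff ![v0,v1,v2,v3] ?_ ?_)
  · intro i j hij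
    fin_cases i <;> fin_cases j <;> simp_all
  · intro i j
    fin_cases i <;> fin_cases j <;>
      simp only [Matrix.cons_val_zero, Matrix.cons_val_one, Matrix.head_cons, Matrix.cons_val_two,
        Matrix.tail_cons, Matrix.cons_val_three, Matrix.cons_val_fin_one] <;>
      first
      | exact iff_of_true (by assumption) (by decide)
      | exact iff_of_false (by assumption) (by decide)
      | exact iff_of_false (H.loopless.irrefl _) (by decide)

lemma fin_sub_val_eq_one {n : ℕ} (hn : 2 ≤ n) (u v : Fin n) :
    (u - v).val = 1 ↔ (u.val = v.val + 1 ∨ (v.val + 1 = n ∧ u.val = 0)) := by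
  obtain ⟨a, ha⟩ := u; obtain ⟨b, hb⟩ := v
  rw [Fin.sub_def]
  simp only [Fin.val_mk]
  rcases Nat.lt_or_ge ((n - b) + a) n with h | h
  · rw [Nat.mod_eq_of_lt h]; omega
  · rw [Nat.mod_eq_sub_mod h, Nat.mod_eq_of_lt (by omega)]; omega

lemma cycle_adj_iff {n : ℕ} (hn : 2 ≤ n) (u v : Fin n) :
    (cycleGraph n).Adj u v ↔
      (u.val = v.val + 1 ∨ v.val = u.val + 1 ∨ (v.val + 1 = n ∧ u.val = 0) ∨
        (u.val + 1 = n ∧ v.val = 0)) := by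
  rw [cycleGraph_adj', fin_sub_val_eq_one hn, fin_sub_val_eq_one hn]
  tauto

lemma crossing {V : Type*} {G : SimpleGraph V} {S : Set V} :
    ∀ {u w : V} (_ : G.Walk u w), u ∈ S → w ∉ S → ∃ s ∈ S, ∃ t, t ∉ S ∧ G.Adj s t := by
  intro u w p
  induction p with
  | nil => intro h h'; exact absurd h h'
  | @cons u v w h p ih =>
    intro hu hw
    by_cases hv : v ∈ S
    · exact ih hv hw
    · exact ⟨u, hu, v, hv, h⟩

lemma threeLP_of_embed {V W : Type*} {A : SimpleGraph V} {B : SimpleGraph W} (e : A ↪g B)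
    (hB : Is3LeafPower B) : Is3LeafPower A := by
  obtain ⟨hb, hd, hg, hc⟩ := hB
  exact ⟨⟨fun f => hb.false (e.comp f)⟩, ⟨fun f => hd.false (e.comp f)⟩,
    ⟨fun f => hg.false (e.comp f)⟩, fun n hn => ⟨fun f => (hc n hn).false (e.comp f)⟩⟩

def jc_swap {V1 V2 : Type*} (G1 : SimpleGraph V1) (G2 : SimpleGraph V2)
    (S1 : Set V1) (S2 : Set V2) :
    (joinComp G2 G1 S2 S1) ≃g (joinComp G1 G2 S1 S2) := by
  refine ⟨Equiv.sumComm V2 V1, ?_⟩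
  intro a b
  rcases a with x | x <;> rcases b with y | y <;>
    simp only [Equiv.sumComm_apply, Sum.swap_inl, Sum.swap_inr, jc_ll, jc_rr, jc_lr, jc_rl] <;>
    tauto

lemma key {V1 V2 : Type*} (G1 : SimpleGraph V1) (G2 : SimpleGraph V2)
    (h1 : G1.Connected) (h2 : G2.Connected) (S1 : Set V1) (S2 : Set V2)
    (hS2 : S2.Nonempty)
    (hH : Is3LeafPower (joinComp G1 G2 S1 S2)) (hnc : ¬ G1.IsClique S1) :
    (∃ v : V1, S1 = {x | G1.Adj v x} ∪ {v}) ∧ S2 = Set.univ ∧ G2.IsClique Set.univ := by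
  classical
  set H := joinComp G1 G2 S1 S2 with hHdef
  obtain ⟨s0, hs0⟩ := hS2
  -- a minimal non-adjacent pair in S1
  have hP : ∃ n, ∃ a ∈ S1, ∃ b ∈ S1, a ≠ b ∧ ¬G1.Adj a b ∧ G1.dist a b = n := by
    rw [SimpleGraph.isClique_iff, Set.Pairwise] at hnc; push_neg at hnc
    obtain ⟨a, ha, b, hb, hne, hnadj⟩ := hnc
    exact ⟨_, a, ha, b, hb, hne, hnadj, rfl⟩
  obtain ⟨d, hdspec, hmin⟩ : ∃ d, (∃ a ∈ S1, ∃ b ∈ S1, a ≠ b ∧ ¬G1.Adj a b ∧ G1.dist a b = d) ∧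
      ∀ m, m < d → ¬(∃ a ∈ S1, ∃ b ∈ S1, a ≠ b ∧ ¬G1.Adj a b ∧ G1.dist a b = m) :=
    ⟨Nat.find hP, Nat.find_spec hP, fun m hm => Nat.find_min hP hm⟩
  obtain ⟨a, ha, b, hb, hab, hnadjab, hdab⟩ := hdspec
  have hd2 : 2 ≤ d := by
    rcases Nat.lt_or_ge d 2 with h | h
    · interval_cases d
      · exact absurd (h1.dist_eq_zero_iff.mp hdab) hab
      · exact absurd (SimpleGraph.dist_eq_one_iff_adj.mp hdab) hnadjab
    · exact h
  -- shortest path from a to b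
  obtain ⟨p, hp⟩ := h1.exists_walk_length_eq_dist a b
  rw [hdab] at hp
  have hx0 : p.getVert 0 = a := p.getVert_zero
  have hxd : p.getVert d = b := by rw [← hp]; exact p.getVert_length
  have hadj : ∀ i, i < d → G1.Adj (p.getVert i) (p.getVert (i + 1)) :=
    fun i hi => p.adj_getVert_succ (by omega)
  have hub : ∀ i k, i + k ≤ d → G1.dist (p.getVert i) (p.getVert (i + k)) ≤ k := by
    intro i k
    induction k with
    | zero => intro _; simp
    | succ k ih =>
      intro h
      have h2 := hadj (i + k) (by omega)
      have h3 : G1.dist (p.getVert (i + k)) (p.getVert (i + k + 1)) = 1 :=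
        SimpleGraph.dist_eq_one_iff_adj.mpr h2
      have h4 := ih (by omega)
      have h5 := h1.dist_triangle (u := p.getVert i) (v := p.getVert (i + k))
        (w := p.getVert (i + k + 1))
      show G1.dist (p.getVert i) (p.getVert (i + k + 1)) ≤ k + 1
      omega
  have hub' : ∀ i j, i ≤ j → j ≤ d → G1.dist (p.getVert i) (p.getVert j) ≤ j - i := by
    intro i j hij hjd
    have := hub i (j - i) (by omega)
    rw [show i + (j - i) = j from by omega] at this
    exact this
  have hdist : ∀ i j, i ≤ j → j ≤ d → G1.dist (p.getVert i) (p.getVert j) = j - i := by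
    intro i j hij hjd
    refine le_antisymm (hub' i j hij hjd) ?_
    have u1 : G1.dist a (p.getVert i) ≤ i := by
      have := hub' 0 i (by omega) (by omega); rwa [hx0] at this
    have u2 : G1.dist (p.getVert j) b ≤ d - j := by
      have := hub' j d hjd le_rfl; rwa [hxd] at this
    have t1 := h1.dist_triangle (u := a) (v := p.getVert i) (w := p.getVert j)
    have t2 := h1.dist_triangle (u := a) (v := p.getVert j) (w := b)
    omega
  have hne : ∀ i j, i < j → j ≤ d → p.getVert i ≠ p.getVert j := by
    intro i j hij hjd heq
    have := hdist i j (by omega) hjd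
    rw [heq, SimpleGraph.dist_self] at this
    omega
  have hnadj2 : ∀ i j, i + 2 ≤ j → j ≤ d → ¬G1.Adj (p.getVert i) (p.getVert j) := by
    intro i j hij hjd hadj'
    have := hdist i j (by omega) hjd
    rw [SimpleGraph.dist_eq_one_iff_adj.mpr hadj'] at this
    omega
  have hch : ∀ i j, i ≤ d → j ≤ d →
      (G1.Adj (p.getVert i) (p.getVert j) ↔ (i = j + 1 ∨ j = i + 1)) := by
    intro i j hi hj
    rcases le_total i j with h | h
    · rw [← SimpleGraph.dist_eq_one_iff_adj, hdist i j h hj]; omega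
    · rw [← SimpleGraph.dist_eq_one_iff_adj, SimpleGraph.dist_comm, hdist j i h hi]; omega
  -- there is an internal path vertex in S1
  have hint : ∃ i, 0 < i ∧ i < d ∧ p.getVert i ∈ S1 := by
    by_contra hno
    push_neg at hno
    refine (hH.2.2.2 (d + 2) (by omega)).false (embed_of_iff
      (fun k : Fin (d + 2) => if k.val ≤ d then Sum.inl (p.getVert k.val) else Sum.inr s0) ?_ ?_)
    · intro i j hij
      by_cases hi : i.val ≤ d <;> by_cases hj : j.val ≤ d <;> simp only [hi, hj, if_pos, if_neg,
        if_true, if_false, reduceIte] at hij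
      · rcases Nat.lt_trichotomy i.val j.val with h | h | h
        · exact absurd (Sum.inl.inj hij) (hne _ _ h hj)
        · exact Fin.ext h
        · exact absurd (Sum.inl.inj hij.symm) (hne _ _ h hi)
      · exact absurd hij (by simp)
      · exact absurd hij (by simp)
      · exact Fin.ext (by omega)
    · intro i j
      rcases eq_or_ne i j with rfl | hij
      · exact iff_of_false ((joinComp G1 G2 S1 S2).loopless.irrefl _) ((cycleGraph _).loopless.irrefl _)
      have hvne : i.val ≠ j.val := fun h => hij (Fin.ext h)
      rw [cycle_adj_iff (by omega)]
      by_cases hi : i.val ≤ d <;> by_cases hj : j.val ≤ d <;>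
        simp only [hi, hj, if_true, if_false, reduceIte]
      · rw [jc_ll, hch _ _ hi hj]; omega
      · have hj' : j.val = d + 1 := by omega
        rw [jc_lr]
        constructor
        · rintro ⟨hmem, -⟩
          rcases Nat.eq_zero_or_pos i.val with h0 | h0
          · omega
          · rcases Nat.lt_or_ge i.val d with h3 | h3
            · exact absurd hmem (hno _ h0 h3)
            · omega
        · intro h
          have : i.val = 0 ∨ i.val = d := by omega
          rcases this with h | h <;> rw [h]
          · rw [hx0]; exact ⟨ha, hs0⟩
          · rw [hxd]; exact ⟨hb, hs0⟩
      · have hi' : i.val = d + 1 := by omega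
        rw [jc_rl]
        constructor
        · rintro ⟨hmem, -⟩
          rcases Nat.eq_zero_or_pos j.val with h0 | h0
          · omega
          · rcases Nat.lt_or_ge j.val d with h3 | h3
            · exact absurd hmem (hno _ h0 h3)
            · omega
        · intro h
          have : j.val = 0 ∨ j.val = d := by omega
          rcases this with h | h <;> rw [h]
          · rw [hx0]; exact ⟨ha, hs0⟩
          · rw [hxd]; exact ⟨hb, hs0⟩
      · omega
  -- d = 2
  have hd2' : d = 2 := by
    by_contra hd3
    have hd3 : 3 ≤ d := by omega
    obtain ⟨i, hi0, hid, hiS⟩ := hint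
    rcases Nat.lt_or_ge i 2 with hi2 | hi2
    · -- i = 1 : use pair (x 1, b)
      have hi1 : i = 1 := by omega
      subst hi1
      refine hmin (d - 1) (by omega) ⟨p.getVert 1, hiS, b, hb, ?_, ?_, ?_⟩
      · have h' := hne 1 d (by omega) le_rfl; rwa [hxd] at h'
      · have := hnadj2 1 d (by omega) le_rfl; rwa [hxd] at this
      · have := hdist 1 d (by omega) le_rfl; rwa [hxd] at this
    · -- i ≥ 2 : use pair (a, x i)
      refine hmin i (by omega) ⟨a, ha, p.getVert i, hiS, ?_, ?_, ?_⟩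
      · have := hne 0 i (by omega) (by omega); rwa [hx0] at this
      · have := hnadj2 0 i (by omega) (by omega); rwa [hx0] at this
      · have := hdist 0 i (by omega) (by omega); rwa [hx0] at this
  -- the center c
  obtain ⟨c, hc1, hc2, hcS⟩ : ∃ c, G1.Adj a c ∧ G1.Adj c b ∧ c ∈ S1 := by
    obtain ⟨i, hi0, hid, hiS⟩ := hint
    have hi1 : i = 1 := by omega
    subst hi1
    refine ⟨p.getVert 1, ?_, ?_, hiS⟩
    · have h' := hadj 0 (by omega); rwa [hx0] at h'
    · have h' := hadj 1 (by omega)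
      rwa [show (1 : ℕ) + 1 = d from by omega, hxd] at h'
  -- S2 is a clique
  have hS2cl : G2.IsClique S2 := by
    intro s hs t ht hst
    by_contra hnadj
    exact no_C4 (hH.2.2.2 4 le_rfl)
      (jc_lr.mpr ⟨ha, hs⟩) (jc_rl.mpr ⟨hb, hs⟩) (jc_lr.mpr ⟨hb, ht⟩) (jc_lr.mpr ⟨ha, ht⟩)
      (fun h => hnadjab (jc_ll.mp h)) (fun h => hnadj (jc_rr.mp h))
      (fun h => hab (Sum.inl.inj h)) (fun h => hst (Sum.inr.inj h))
  -- S2 = univ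
  have hS2univ : S2 = Set.univ := by
    ext t0
    simp only [Set.mem_univ, iff_true]
    by_contra ht0
    obtain ⟨s, hs, t, ht, hstadj⟩ := crossing ((h2.preconnected s0 t0).some) hs0 ht0
    exact no_dart hH.2.1
      (jc_lr.mpr ⟨ha, hs⟩) (jc_ll.mpr hc1) (jc_lr.mpr ⟨hb, hs⟩) (jc_ll.mpr hc2.symm)
      (jc_rl.mpr ⟨hcS, hs⟩) (jc_rr.mpr hstadj)
      (fun h => hnadjab (jc_ll.mp h))
      (fun h => ht (jc_lr.mp h).2) (fun h => ht (jc_lr.mp h).2) (fun h => ht (jc_lr.mp h).2)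
      (fun h => hab (Sum.inl.inj h)) (by simp) (by simp) (by simp)
  refine ⟨⟨c, ?_⟩, hS2univ, by rwa [hS2univ] at hS2cl⟩
  ext w
  simp only [Set.mem_union, Set.mem_setOf_eq, Set.mem_singleton_iff]
  constructor
  · intro hw
    by_cases hwc : w = c
    · exact Or.inr hwc
    left
    by_contra hcw
    have hwa : w ≠ a := fun h => hcw (h ▸ hc1.symm)
    have hwb : w ≠ b := fun h => hcw (h ▸ hc2)
    by_cases hwa' : G1.Adj w a <;> by_cases hwb' : G1.Adj w b
    · -- C4: a - c - b - w
      exact no_C4 (hH.2.2.2 4 le_rfl)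
        (jc_ll.mpr hc1) (jc_ll.mpr hc2) (jc_ll.mpr hwb'.symm) (jc_ll.mpr hwa'.symm)
        (fun h => hnadjab (jc_ll.mp h)) (fun h => hcw (jc_ll.mp h))
        (fun h => hab (Sum.inl.inj h)) (fun h => hwc (Sum.inl.inj h).symm)
    · -- gem w-a-c-b + s0
      exact no_gem hH.2.2.1
        (jc_ll.mpr hwa') (jc_ll.mpr hc1) (jc_ll.mpr hc2)
        (jc_lr.mpr ⟨hw, hs0⟩) (jc_lr.mpr ⟨ha, hs0⟩) (jc_lr.mpr ⟨hcS, hs0⟩) (jc_lr.mpr ⟨hb, hs0⟩)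
        (fun h => hcw ((jc_ll.mp h).symm)) (fun h => hwb' (jc_ll.mp h))
        (fun h => hnadjab (jc_ll.mp h))
        (fun h => hwc (Sum.inl.inj h)) (fun h => hwb (Sum.inl.inj h))
        (fun h => hab (Sum.inl.inj h))
    · -- gem w-b-c-a + s0
      exact no_gem hH.2.2.1
        (jc_ll.mpr hwb') (jc_ll.mpr hc2.symm) (jc_ll.mpr hc1.symm)
        (jc_lr.mpr ⟨hw, hs0⟩) (jc_lr.mpr ⟨hb, hs0⟩) (jc_lr.mpr ⟨hcS, hs0⟩) (jc_lr.mpr ⟨ha, hs0⟩)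
        (fun h => hcw ((jc_ll.mp h).symm)) (fun h => hwa' (jc_ll.mp h))
        (fun h => hnadjab ((jc_ll.mp h).symm))
        (fun h => hwc (Sum.inl.inj h)) (fun h => hwa (Sum.inl.inj h))
        (fun h => hab (Sum.inl.inj h).symm)
    · -- dart a,b,s0,c + w
      exact no_dart hH.2.1
        (jc_lr.mpr ⟨ha, hs0⟩) (jc_ll.mpr hc1) (jc_lr.mpr ⟨hb, hs0⟩) (jc_ll.mpr hc2.symm)
        (jc_rl.mpr ⟨hcS, hs0⟩) (jc_rl.mpr ⟨hw, hs0⟩)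
        (fun h => hnadjab (jc_ll.mp h))
        (fun h => hwa' ((jc_ll.mp h).symm)) (fun h => hwb' ((jc_ll.mp h).symm))
        (fun h => hcw (jc_ll.mp h))
        (fun h => hab (Sum.inl.inj h)) (fun h => hwa (Sum.inl.inj h).symm)
        (fun h => hwb (Sum.inl.inj h).symm) (fun h => hwc (Sum.inl.inj h).symm)
  · rintro (hcwadj | rfl)
    swap
    · exact hcS
    by_contra hwS
    have hwa : w ≠ a := fun h => hwS (h ▸ ha)
    have hwb : w ≠ b := fun h => hwS (h ▸ hb)
    by_cases hwa' : G1.Adj w a <;> by_cases hwb' : G1.Adj w b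
    · -- C4: a - w - b - s0
      exact no_C4 (hH.2.2.2 4 le_rfl)
        (jc_ll.mpr hwa'.symm) (jc_ll.mpr hwb') (jc_lr.mpr ⟨hb, hs0⟩) (jc_lr.mpr ⟨ha, hs0⟩)
        (fun h => hnadjab (jc_ll.mp h)) (fun h => hwS (jc_lr.mp h).1)
        (fun h => hab (Sum.inl.inj h)) (by simp)
    · -- gem w-a-s0-b + c
      exact no_gem hH.2.2.1
        (jc_ll.mpr hwa') (jc_lr.mpr ⟨ha, hs0⟩) (jc_rl.mpr ⟨hb, hs0⟩)
        (jc_ll.mpr hcwadj.symm) (jc_ll.mpr hc1) (jc_rl.mpr ⟨hcS, hs0⟩) (jc_ll.mpr hc2.symm)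
        (fun h => hwS (jc_lr.mp h).1) (fun h => hwb' (jc_ll.mp h))
        (fun h => hnadjab (jc_ll.mp h))
        (by simp) (fun h => hwb (Sum.inl.inj h)) (fun h => hab (Sum.inl.inj h))
    · -- gem w-b-s0-a + c
      exact no_gem hH.2.2.1
        (jc_ll.mpr hwb') (jc_lr.mpr ⟨hb, hs0⟩) (jc_rl.mpr ⟨ha, hs0⟩)
        (jc_ll.mpr hcwadj.symm) (jc_ll.mpr hc2.symm) (jc_rl.mpr ⟨hcS, hs0⟩) (jc_ll.mpr hc1)
        (fun h => hwS (jc_lr.mp h).1) (fun h => hwa' (jc_ll.mp h))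
        (fun h => hnadjab ((jc_ll.mp h).symm))
        (by simp) (fun h => hwa (Sum.inl.inj h)) (fun h => hab (Sum.inl.inj h).symm)
    · -- dart a,b,c,s0 + w
      exact no_dart hH.2.1
        (jc_ll.mpr hc1) (jc_lr.mpr ⟨ha, hs0⟩) (jc_ll.mpr hc2.symm) (jc_lr.mpr ⟨hb, hs0⟩)
        (jc_lr.mpr ⟨hcS, hs0⟩) (jc_ll.mpr hcwadj)
        (fun h => hnadjab (jc_ll.mp h))
        (fun h => hwa' ((jc_ll.mp h).symm)) (fun h => hwb' ((jc_ll.mp h).symm))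
        (fun h => hwS (jc_rl.mp h).1)
        (fun h => hab (Sum.inl.inj h)) (fun h => hwa (Sum.inl.inj h).symm)
        (fun h => hwb (Sum.inl.inj h).symm) (by simp)

theorem joinComp_threeLeafPower_necessary {V1 V2 : Type*}
    (G1 : SimpleGraph V1) (G2 : SimpleGraph V2)
    (h1 : G1.Connected) (h2 : G2.Connected)
    (hL1 : Is3LeafPower G1) (hL2 : Is3LeafPower G2)
    (S1 : Set V1) (S2 : Set V2) (hS1 : S1.Nonempty) (hS2 : S2.Nonempty)
    (hH : Is3LeafPower (joinComp G1 G2 S1 S2)) :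
    (G1.IsClique S1 ∧ G2.IsClique S2) ∨
    (∃ v : V1, S1 = {x | G1.Adj v x} ∪ {v} ∧ S2 = Set.univ ∧ G2.IsClique Set.univ) ∨
    (∃ v : V2, S2 = {x | G2.Adj v x} ∪ {v} ∧ S1 = Set.univ ∧ G1.IsClique Set.univ) := by
  by_cases hc1 : G1.IsClique S1
  · by_cases hc2 : G2.IsClique S2
    · exact Or.inl ⟨hc1, hc2⟩
    · have hH' : Is3LeafPower (joinComp G2 G1 S2 S1) :=
        threeLP_of_embed (jc_swap G1 G2 S1 S2).toEmbedding hH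
      obtain ⟨⟨v, hv⟩, hS1univ, hcl⟩ := key G2 G1 h2 h1 S2 S1 hS1 hH' hc2
      exact Or.inr (Or.inr ⟨v, hv, hS1univ, hcl⟩)
  · obtain ⟨⟨v, hv⟩, hS2univ, hcl⟩ := key G1 G2 h1 h2 S1 S2 hS2 hH hc1
    exact Or.inr (Or.inl ⟨v, hv, hS2univ, hcl⟩)
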